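/- Let n ≥ 2 be an integer that is not square-free. Then there exist two finite groups G₁ and G₂, both of order n, such that G₁ and G₂ are not isomorphic but the posets Iso(G₁) and Iso(G₂) are order isomorphic. -/

import Mathlib

/-- The setoid on subgroups of `G` given by group isomorphism. -/
def isoSetoid (G : Type*) [Group G] : Setoid (Subgroup G) where
  r H K := Nonempty (H ≃* K)
  iseqv := ⟨fun H => ⟨MulEquiv.refl H⟩, fun ⟨e⟩ => ⟨e.symm⟩, fun ⟨e⟩ ⟨f⟩ => ⟨e.trans f⟩⟩

/-- `IsoClasses G` is the set of equivalence classes of subgroups of `G`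
under group isomorphism. -/
def IsoClasses (G : Type*) [Group G] : Type _ := Quotient (isoSetoid G)

/-- The class of a subgroup `H` in `IsoClasses G`. -/
def IsoCls {G : Type*} [Group G] (H : Subgroup G) : IsoClasses G :=
  Quotient.mk (isoSetoid G) H

/-- `[H] ≤ [K]` iff some member of `[H]` is contained in some member of `[K]`. -/
instance instLEIsoClasses (G : Type*) [Group G] : LE (IsoClasses G) where
  le x y := ∃ H K : Subgroup G, IsoCls H = x ∧ IsoCls K = y ∧ H ≤ K

open Subgroup

private noncomputable def crd {G : Type*} [Group G] : IsoClasses G → ℕ :=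
  Quotient.lift (fun H : Subgroup G => Nat.card H)
    (fun _ _ h => h.elim fun e => Nat.card_congr e.toEquiv)

private lemma crd_mk {G : Type*} [Group G] (H : Subgroup G) : crd (IsoCls H) = Nat.card H := rfl

private lemma isoClasses_le_def {G : Type*} [Group G] (x y : IsoClasses G) :
    x ≤ y ↔ ∃ H K : Subgroup G, IsoCls H = x ∧ IsoCls K = y ∧ H ≤ K := Iff.rfl

/-- A finite abelian group has a subgroup of every order dividing the group order. -/
private theorem my_exists_subgroup_card_eq :
    ∀ (d : ℕ) (G : Type) [CommGroup G] [Finite G], d ∣ Nat.card G →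
      ∃ H : Subgroup G, Nat.card H = d := by
  intro d
  induction d using Nat.strong_induction_on with
  | _ d ih =>
    intro G _ _ hd
    rcases eq_or_ne d 1 with rfl | hd1
    · exact ⟨⊥, Subgroup.card_bot⟩
    have hcG : 0 < Nat.card G := Nat.card_pos
    have hd0 : d ≠ 0 := by rintro rfl; rw [Nat.zero_dvd] at hd; omega
    have hp : d.minFac.Prime := Nat.minFac_prime hd1
    haveI : Fact d.minFac.Prime := ⟨hp⟩
    cases nonempty_fintype G
    obtain ⟨g, hg⟩ := exists_prime_orderOf_dvd_card (G := G) d.minFac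
      (by rw [← Nat.card_eq_fintype_card]; exact dvd_trans d.minFac_dvd hd)
    set N := Subgroup.zpowers g with hNdef
    have hN : Nat.card N = d.minFac := by rw [hNdef, Nat.card_zpowers, hg]
    have hcard : Nat.card G = Nat.card (G ⧸ N) * d.minFac := by
      rw [← hN]; exact Subgroup.card_eq_card_quotient_mul_card_subgroup N
    have hdm : d / d.minFac * d.minFac = d := Nat.div_mul_cancel d.minFac_dvd
    have hdvd' : d / d.minFac ∣ Nat.card (G ⧸ N) := by
      obtain ⟨c, hc⟩ := hd
      refine ⟨c, ?_⟩
      have h1 : Nat.card (G ⧸ N) * d.minFac = (d / d.minFac * c) * d.minFac := by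
        calc Nat.card (G ⧸ N) * d.minFac = Nat.card G := hcard.symm
        _ = d * c := hc
        _ = (d / d.minFac * d.minFac) * c := by rw [hdm]
        _ = (d / d.minFac * c) * d.minFac := by ring
      exact Nat.eq_of_mul_eq_mul_right hp.pos h1
    obtain ⟨H', hH'⟩ := ih (d / d.minFac)
      (Nat.div_lt_self (by omega) hp.one_lt) (G ⧸ N) hdvd'
    refine ⟨Subgroup.comap (QuotientGroup.mk' N) H', ?_⟩
    have h1 := Subgroup.card_mul_index (Subgroup.comap (QuotientGroup.mk' N) H')
    rw [Subgroup.index_comap_of_surjective _ (QuotientGroup.mk'_surjective N)] at h1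
    have h2 := Subgroup.card_mul_index H'
    have hidx : H'.index ≠ 0 := by
      intro h0
      rw [h0, mul_zero] at h2
      have : 0 < Nat.card (G ⧸ N) := Nat.card_pos
      omega
    have key : Nat.card (Subgroup.comap (QuotientGroup.mk' N) H') * H'.index
        = d * H'.index := by
      rw [h1, hcard, ← h2, hH']
      conv_rhs => rw [← hdm]
      ring
    exact Nat.eq_of_mul_eq_mul_right (Nat.pos_of_ne_zero hidx) key

private theorem master {G : Type} [CommGroup G] [Finite G]
    (hiso : ∀ H K : Subgroup G, Nat.card H = Nat.card K → Nonempty (H ≃* K)) :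
    (∀ x : IsoClasses G, crd x ∣ Nat.card G)
    ∧ (∀ x y : IsoClasses G, x ≤ y ↔ crd x ∣ crd y)
    ∧ Function.Injective (crd (G := G))
    ∧ (∀ d, d ∣ Nat.card G → ∃ x : IsoClasses G, crd x = d) := by
  refine ⟨?_, ?_, ?_, ?_⟩
  · intro x
    induction x using Quotient.ind with
    | _ H => exact Subgroup.card_subgroup_dvd_card H
  · intro x y
    constructor
    · rintro ⟨H, K, rfl, rfl, hle⟩
      exact Subgroup.card_dvd_of_le hle
    · induction x using Quotient.ind with
      | _ H =>
        induction y using Quotient.ind with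
        | _ K =>
          intro hdvd
          obtain ⟨L, hL⟩ := my_exists_subgroup_card_eq (Nat.card H) K hdvd
          set L' := L.map K.subtype with hL'def
          have hcL' : Nat.card L' = Nat.card H := by
            rw [hL'def, ← hL]
            exact (Nat.card_congr (Subgroup.equivMapOfInjective L K.subtype
              K.subtype_injective).toEquiv).symm
          obtain ⟨e⟩ := hiso L' H hcL'
          exact ⟨L', K, Quotient.sound ⟨e⟩, rfl, Subgroup.map_subtype_le L⟩
  · intro x y hxy
    induction x using Quotient.ind with
    | _ H =>
      induction y using Quotient.ind with
      | _ K => exact Quotient.sound (hiso H K hxy)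
  · intro d hd
    obtain ⟨H, hH⟩ := my_exists_subgroup_card_eq d G hd
    exact ⟨IsoCls H, hH⟩

private theorem buildOrderIso {G₁ G₂ : Type} [CommGroup G₁] [CommGroup G₂]
    [Finite G₁] [Finite G₂] (hcard : Nat.card G₁ = Nat.card G₂)
    (h₁ : ∀ H K : Subgroup G₁, Nat.card H = Nat.card K → Nonempty (H ≃* K))
    (h₂ : ∀ H K : Subgroup G₂, Nat.card H = Nat.card K → Nonempty (H ≃* K)) :
    Nonempty (IsoClasses G₁ ≃o IsoClasses G₂) := by
  obtain ⟨dvd₁, ord₁, inj₁, sur₁⟩ := master h₁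
  obtain ⟨dvd₂, ord₂, inj₂, sur₂⟩ := master h₂
  have hf : ∀ x : IsoClasses G₁, ∃ y : IsoClasses G₂, crd y = crd x :=
    fun x => sur₂ (crd x) (hcard ▸ dvd₁ x)
  have hg : ∀ y : IsoClasses G₂, ∃ x : IsoClasses G₁, crd x = crd y :=
    fun y => sur₁ (crd y) (hcard ▸ dvd₂ y)
  choose f hfc using hf
  choose g hgc using hg
  refine ⟨⟨⟨f, g, ?_, ?_⟩, ?_⟩⟩
  · intro x; exact inj₁ (by rw [hgc, hfc])
  · intro y; exact inj₂ (by rw [hfc, hgc])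
  · intro a b
    simp only [Equiv.coe_fn_mk]
    rw [ord₂, ord₁, hfc, hfc]

private theorem hiso_cyclic {G : Type} [Group G] [IsCyclic G]
    (H K : Subgroup G) (h : Nat.card H = Nat.card K) : Nonempty (H ≃* K) :=
  ⟨mulEquivOfCyclicCardEq h⟩

private theorem pow_p_eq_one {p k : ℕ} (a : Multiplicative (Fin k → ZMod p)) :
    a ^ p = 1 := by
  rw [← ofAdd_toAdd a, ← ofAdd_nsmul]
  convert ofAdd_zero using 2
  funext i
  simp [nsmul_eq_mul, ZMod.natCast_self]

private theorem mod_iso {p : ℕ} [Fact p.Prime] {A : Type} [CommGroup A] [Finite A]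
    (S T : Subgroup A)
    (m1 : Module (ZMod p) (Additive S)) (m2 : Module (ZMod p) (Additive T))
    (h : Nat.card S = Nat.card T) : Nonempty (S ≃* T) := by
  have hp : p.Prime := Fact.out
  haveI : NeZero p := ⟨hp.ne_zero⟩
  letI := m1; letI := m2
  haveI : Finite (Additive S) := inferInstanceAs (Finite S)
  haveI : Finite (Additive T) := inferInstanceAs (Finite T)
  haveI : Module.Finite (ZMod p) (Additive S) := Module.Finite.of_finite
  haveI : Module.Finite (ZMod p) (Additive T) := Module.Finite.of_finite
  cases nonempty_fintype (Additive S)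
  cases nonempty_fintype (Additive T)
  have e1 : Fintype.card (Additive S) = p ^ Module.finrank (ZMod p) (Additive S) := by
    rw [Module.card_eq_pow_finrank (K := ZMod p), ZMod.card]
  have e2 : Fintype.card (Additive T) = p ^ Module.finrank (ZMod p) (Additive T) := by
    rw [Module.card_eq_pow_finrank (K := ZMod p), ZMod.card]
  have hrank : Module.finrank (ZMod p) (Additive S) = Module.finrank (ZMod p) (Additive T) := by
    refine Nat.pow_right_injective hp.two_le ?_
    show p ^ _ = p ^ _
    rw [← e1, ← e2, ← Nat.card_eq_fintype_card, ← Nat.card_eq_fintype_card]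
    exact h
  obtain ⟨l⟩ := FiniteDimensional.nonempty_linearEquiv_of_finrank_eq
    (R := ZMod p) (M := Additive S) (M' := Additive T) hrank
  exact ⟨MulEquiv.toAdditive.symm l.toAddEquiv⟩

private theorem elem_ab_iso {p k : ℕ} [Fact p.Prime]
    (S T : Subgroup (Multiplicative (Fin k → ZMod p)))
    (h : Nat.card S = Nat.card T) : Nonempty (S ≃* T) := by
  have hmod : ∀ (U : Subgroup (Multiplicative (Fin k → ZMod p))) (x : Additive U),
      p • x = 0 := by
    intro U x
    have : (x.toMul : U) ^ p = 1 := by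
      apply Subtype.ext
      push_cast
      exact pow_p_eq_one _
    rw [← toMul_nsmul] at this
    exact toMul_eq_one.mp this
  exact mod_iso S T (AddCommGroup.zmodModule (hmod S)) (AddCommGroup.zmodModule (hmod T)) h

/-- Coprime decomposition of subgroups of a product. -/
private theorem subgroup_prod_decomp {A B : Type} [Group A] [Group B] [Finite A] [Finite B]
    (hco : (Nat.card A).Coprime (Nat.card B)) (H : Subgroup (A × B)) :
    H = (H.map (MonoidHom.fst A B)).prod (H.map (MonoidHom.snd A B)) := by
  have key : ∀ a b, (a, b) ∈ H → (a, (1 : B)) ∈ H := by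
    intro a b hab
    obtain ⟨s, hs1, hs2⟩ := Nat.chineseRemainder hco 1 0
    have hBs : Nat.card B ∣ s := (Nat.modEq_zero_iff_dvd).mp hs2
    have has : a ^ s = a := by
      have hmod : s ≡ 1 [MOD orderOf a] :=
        Nat.ModEq.of_dvd (orderOf_dvd_natCard a) hs1
      calc a ^ s = a ^ 1 := pow_eq_pow_iff_modEq.mpr hmod
      _ = a := pow_one a
    have hbs : b ^ s = 1 := by
      obtain ⟨t, rfl⟩ := hBs
      rw [pow_mul, pow_card_eq_one', one_pow]
    have hpow := H.pow_mem hab s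
    rwa [Prod.pow_mk, has, hbs] at hpow
  apply le_antisymm
  · intro x hx
    exact Subgroup.mem_prod.mpr ⟨Subgroup.mem_map_of_mem _ hx, Subgroup.mem_map_of_mem _ hx⟩
  · rintro ⟨a, b⟩ hx
    rw [Subgroup.mem_prod] at hx
    obtain ⟨⟨a₁, b₁⟩, hx₁, hx₁'⟩ := Subgroup.mem_map.mp hx.1
    obtain ⟨⟨a₂, b₂⟩, hx₂, hx₂'⟩ := Subgroup.mem_map.mp hx.2
    have ha1 : a₁ = a := hx₁'
    have hb2 : b₂ = b := hx₂'
    subst ha1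
    subst hb2
    have h1 : (a₁, (1 : B)) ∈ H := key a₁ b₁ hx₁
    have h2 : ((a₁ : A), b₂) ∈ H := by
      have ha2 : (a₂, (1 : B)) ∈ H := key a₂ b₂ hx₂
      have hmm := H.mul_mem (H.mul_mem h1 (H.inv_mem ha2)) hx₂
      simpa [Prod.mk_mul_mk] using hmm
    exact h2

private theorem card_eq_of_decomp {A B : Type} [Group A] [Group B]
    (H : Subgroup (A × B))
    (hH : H = (H.map (MonoidHom.fst A B)).prod (H.map (MonoidHom.snd A B))) :
    Nat.card H = Nat.card (H.map (MonoidHom.fst A B)) * Nat.card (H.map (MonoidHom.snd A B)) := by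
  rw [← Nat.card_prod]
  exact Nat.card_congr ((MulEquiv.subgroupCongr hH).trans (Subgroup.prodEquiv _ _)).toEquiv

/-- Isomorphism of equal-order subgroups for the product group. -/
private theorem hiso_G2 {p k m : ℕ} [Fact p.Prime] (hm : m ≠ 0) (hco : p.Coprime m)
    (H K : Subgroup (Multiplicative (Fin k → ZMod p) × Multiplicative (ZMod m)))
    (h : Nat.card H = Nat.card K) : Nonempty (H ≃* K) := by
  have hp : p.Prime := Fact.out
  set A := Multiplicative (Fin k → ZMod p)
  set B := Multiplicative (ZMod m)
  haveI : NeZero m := ⟨hm⟩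
  have cardA : Nat.card A = p ^ k := by
    show Nat.card (Fin k → ZMod p) = p ^ k
    simp [Nat.card_pi, Nat.card_zmod]
  have cardB : Nat.card B = m := Nat.card_zmod m
  have hcoAB : (Nat.card A).Coprime (Nat.card B) := by
    rw [cardA, cardB]; exact hco.pow_left k
  have hdH := subgroup_prod_decomp hcoAB H
  have hdK := subgroup_prod_decomp hcoAB K
  obtain ⟨SH, hSHdef⟩ : ∃ S, S = H.map (MonoidHom.fst A B) := ⟨_, rfl⟩
  obtain ⟨CH, hCHdef⟩ : ∃ S, S = H.map (MonoidHom.snd A B) := ⟨_, rfl⟩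
  obtain ⟨SK, hSKdef⟩ : ∃ S, S = K.map (MonoidHom.fst A B) := ⟨_, rfl⟩
  obtain ⟨CK, hCKdef⟩ : ∃ S, S = K.map (MonoidHom.snd A B) := ⟨_, rfl⟩
  rw [← hSHdef, ← hCHdef] at hdH
  rw [← hSKdef, ← hCKdef] at hdK
  have hcH : Nat.card H = Nat.card SH * Nat.card CH := by
    rw [hSHdef, hCHdef]; exact card_eq_of_decomp H (by rw [← hSHdef, ← hCHdef]; exact hdH)
  have hcK : Nat.card K = Nat.card SK * Nat.card CK := by
    rw [hSKdef, hCKdef]; exact card_eq_of_decomp K (by rw [← hSKdef, ← hCKdef]; exact hdK)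
  -- coprimality of the factors
  have hSH : Nat.card SH ∣ p ^ k := cardA ▸ Subgroup.card_subgroup_dvd_card SH
  have hSK : Nat.card SK ∣ p ^ k := cardA ▸ Subgroup.card_subgroup_dvd_card SK
  have hCH : Nat.card CH ∣ m :=
    (Subgroup.card_subgroup_dvd_card CH).trans (dvd_of_eq cardB)
  have hCK : Nat.card CK ∣ m :=
    (Subgroup.card_subgroup_dvd_card CK).trans (dvd_of_eq cardB)
  clear hSHdef hCHdef hSKdef hCKdef
  have hcoS : ∀ {x y : ℕ}, x ∣ p ^ k → y ∣ m → x.Coprime y := fun hx hy =>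
    Nat.Coprime.coprime_dvd_left hx (Nat.Coprime.coprime_dvd_right hy (hco.pow_left k))
  have hSHK : Nat.card SH = Nat.card SK := by
    have h1 : Nat.card SH ∣ Nat.card SK * Nat.card CK := by
      rw [← hcK, ← h, hcH]; exact Dvd.intro _ rfl
    have h2 : Nat.card SK ∣ Nat.card SH * Nat.card CH := by
      rw [← hcH, h, hcK]; exact Dvd.intro _ rfl
    exact Nat.dvd_antisymm ((hcoS hSH hCK).dvd_of_dvd_mul_right h1)
      ((hcoS hSK hCH).dvd_of_dvd_mul_right h2)
  have hCHK : Nat.card CH = Nat.card CK := by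
    have hpos : 0 < Nat.card SH := Nat.card_pos
    apply Nat.eq_of_mul_eq_mul_left hpos
    rw [← hcH, h, hcK, hSHK]
  -- isomorphisms of the parts
  obtain ⟨eS⟩ := elem_ab_iso SH SK hSHK
  haveI : IsAddCyclic (ZMod m) := inferInstance
  haveI : IsCyclic B := isCyclic_multiplicative
  obtain ⟨eC⟩ := hiso_cyclic CH CK hCHK
  exact ⟨((MulEquiv.subgroupCongr hdH).trans (Subgroup.prodEquiv SH CH)).trans
    ((eS.prodCongr eC).trans
      (((MulEquiv.subgroupCongr hdK).trans (Subgroup.prodEquiv SK CK)).symm))⟩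

/-- For every integer `n ≥ 2` that is not square-free there exist two
non-isomorphic groups of order `n` whose posets of isomorphism classes of subgroups are
order isomorphic. -/
theorem exists_nonIsomorphic_groups_isoClasses_orderIso (n : ℕ) (hn : 2 ≤ n)
    (h : ¬ Squarefree n) :
    ∃ (G₁ G₂ : Type) (i₁ : Group G₁) (i₂ : Group G₂),
      letI := i₁; letI := i₂;
      Nat.card G₁ = n ∧ Nat.card G₂ = n ∧ IsEmpty (G₁ ≃* G₂) ∧
        Nonempty (IsoClasses G₁ ≃o IsoClasses G₂) := by
  rw [Nat.squarefree_iff_prime_squarefree] at h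
  push_neg at h
  obtain ⟨p, hp, hp2⟩ := h
  haveI : Fact p.Prime := ⟨hp⟩
  have hn0 : n ≠ 0 := by omega
  set k := n.factorization p with hk
  set m := n / p ^ k with hm
  have hpk : p ^ k * m = n := Nat.ordProj_mul_ordCompl_eq_self n p
  have hk2 : 2 ≤ k := by
    rw [hk]
    exact (Nat.Prime.pow_dvd_iff_le_factorization hp hn0).mp (by rwa [pow_two])
  have hpm : ¬ p ∣ m := Nat.not_dvd_ordCompl hp hn0
  have hco : p.Coprime m := (Nat.Prime.coprime_iff_not_dvd hp).mpr hpm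
  have hm0 : m ≠ 0 := by rintro h0; rw [h0, mul_zero] at hpk; omega
  haveI : NeZero n := ⟨hn0⟩
  haveI : NeZero m := ⟨hm0⟩
  refine ⟨Multiplicative (ZMod n),
    Multiplicative (Fin k → ZMod p) × Multiplicative (ZMod m),
    inferInstance, inferInstance, ?_, ?_, ?_, ?_⟩
  · exact Nat.card_zmod n
  · rw [Nat.card_prod]
    show Nat.card (Fin k → ZMod p) * Nat.card (ZMod m) = n
    simp [Nat.card_pi, Nat.card_zmod, hpk]
  · constructor
    intro φ
    have hg : orderOf (Multiplicative.ofAdd (1 : ZMod n)) = n := by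
      rw [orderOf_ofAdd_eq_addOrderOf, ZMod.addOrderOf_one]
    have hφg : orderOf (φ (Multiplicative.ofAdd (1 : ZMod n))) = n :=
      (orderOf_injective φ.toMonoidHom φ.injective _).trans hg
    have hpow : ∀ x : Multiplicative (Fin k → ZMod p) × Multiplicative (ZMod m),
        x ^ (p * m) = 1 := by
      rintro ⟨a, b⟩
      rw [Prod.pow_mk, Prod.mk_eq_one]
      constructor
      · rw [pow_mul, pow_p_eq_one, one_pow]
      · rw [mul_comm, pow_mul]
        have : b ^ m = 1 := by
          rw [← ofAdd_toAdd b, ← ofAdd_nsmul]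
          simp [nsmul_eq_mul, ZMod.natCast_self]
        rw [this, one_pow]
    have hdvd : n ∣ p * m := hφg ▸ orderOf_dvd_of_pow_eq_one (hpow _)
    have hlt : p * m < n := by
      rw [← hpk]
      have : p < p ^ k := by
        conv_lhs => rw [← pow_one p]
        exact Nat.pow_lt_pow_right hp.one_lt (by omega)
      exact (Nat.mul_lt_mul_right (Nat.pos_of_ne_zero hm0)).mpr this
    have := Nat.le_of_dvd (Nat.mul_pos hp.pos (Nat.pos_of_ne_zero hm0)) hdvd
    omega
  · haveI : IsAddCyclic (ZMod n) := inferInstance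
    haveI : IsCyclic (Multiplicative (ZMod n)) := isCyclic_multiplicative
    apply buildOrderIso
    · show Nat.card (ZMod n) = Nat.card ((Fin k → ZMod p) × ZMod m)
      rw [Nat.card_zmod, Nat.card_prod]
      simp [Nat.card_pi, Nat.card_zmod, hpk]
    · exact hiso_cyclic
    · exact hiso_G2 hm0 hco
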